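/- arXiv:2504.15805 — 2 statements merged into one kernel-verified Lean document; each statement's English description precedes it below -/
import Mathlib

section
/- Let H be a real Hilbert space and K ⊆ H a nonempty, closed, convex set whose diameter is at most D (i.e., ‖x − y‖ ≤ D for all x, y ∈ K). Let l_1, …, l_T : H → ℝ be convex functions, each differentiable, whose gradients satisfy ‖∇l_t(x)‖ ≤ G for all x ∈ K and all t. Define iterates by x_1 ∈ K and x_{t+1} = P_K(x_t − η ∇l_t(x_t)) for t = 1, …, T−1, where P_K denotes the metric projection onto K (the unique nearest point of K) and the step size is η = D/(G·√T). Then for every comparator x* ∈ K, the regret satisfies Σ_{t=1}^T l_t(x_t) − Σ_{t=1}^T l_t(x*) ≤ G·D·√T. -/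
open scoped RealInnerProductSpace

lemma convex_grad_ineq {H : Type*} [NormedAddCommGroup H] [InnerProductSpace ℝ H]
    [CompleteSpace H] {f : H → ℝ} (hc : ConvexOn ℝ Set.univ f) (hd : Differentiable ℝ f)
    (x y : H) : f x + ⟪gradient f x, y - x⟫ ≤ f y := by
  set A : ℝ →ᵃ[ℝ] H := AffineMap.lineMap x y
  have hA : ConvexOn ℝ Set.univ (f ∘ A) := by
    simpa using hc.comp_affineMap A
  have hline : HasDerivAt (fun s : ℝ => A s) (y - x) 0 := by
    have : HasDerivAt (fun s : ℝ => s • (y - x) + x) ((1:ℝ) • (y - x)) 0 :=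
      ((hasDerivAt_id (0:ℝ)).smul_const (y - x)).add_const x
    simpa [A, AffineMap.lineMap_apply, vsub_eq_sub, vadd_eq_add, add_comm] using this
  have hfd : HasFDerivAt f (InnerProductSpace.toDual ℝ H (gradient f x)) (A 0) := by
    have := (hd x).hasGradientAt.hasFDerivAt
    simpa [A] using this
  have hcomp : HasDerivAt (f ∘ A) ⟪gradient f x, y - x⟫ 0 := by
    simpa using hfd.comp_hasDerivAt 0 hline
  have hsl := hA.le_slope_of_hasDerivAt (Set.mem_univ (0:ℝ)) (Set.mem_univ (1:ℝ))
    zero_lt_one hcomp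
  rw [slope_def_field] at hsl
  simp only [Function.comp_apply] at hsl
  rw [show A 1 = y by simp [A], show A 0 = x by simp [A]] at hsl
  simp at hsl
  have hgr : ⟪gradient f x, y - x⟫ = fderiv ℝ f x y - fderiv ℝ f x x := by
    rw [gradient, InnerProductSpace.toDual_symm_apply, map_sub]
  linarith

lemma proj_contract {H : Type*} [NormedAddCommGroup H] [InnerProductSpace ℝ H]
    [CompleteSpace H] {K : Set H} (hKne : K.Nonempty) (hKconv : Convex ℝ K)
    (proj : H → H) (hprojMem : ∀ z, proj z ∈ K)
    (hprojNear : ∀ z, ∀ c ∈ K, ‖z - proj z‖ ≤ ‖z - c‖)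
    (z : H) {c : H} (hc : c ∈ K) : ‖proj z - c‖ ^ 2 ≤ ‖z - c‖ ^ 2 := by
  haveI : Nonempty K := hKne.to_subtype
  have hinf : ‖z - proj z‖ = ⨅ w : K, ‖z - w‖ := by
    apply le_antisymm
    · exact le_ciInf fun w => hprojNear z w w.2
    · have hbdd : BddBelow (Set.range fun w : K => ‖z - (w : H)‖) :=
        ⟨0, by rintro r ⟨w, rfl⟩; exact norm_nonneg _⟩
      exact ciInf_le hbdd ⟨proj z, hprojMem z⟩
  have hip : ⟪z - proj z, c - proj z⟫ ≤ 0 :=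
    (norm_eq_iInf_iff_real_inner_le_zero hKconv (hprojMem z)).1 hinf c hc
  have hexp : ‖z - c‖ ^ 2 =
      ‖z - proj z‖ ^ 2 + 2 * ⟪z - proj z, proj z - c⟫ + ‖proj z - c‖ ^ 2 := by
    have := norm_add_sq_real (z - proj z) (proj z - c)
    simpa using this
  have : ⟪z - proj z, proj z - c⟫ = -⟪z - proj z, c - proj z⟫ := by
    rw [show proj z - c = -(c - proj z) by abel, inner_neg_right]
  nlinarith [sq_nonneg ‖z - proj z‖]


/-- Projected online gradient descent with constant step size `η = D / (G √T)`
over a nonempty closed convex set of diameter at most `D`, applied to convex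
differentiable losses with gradients bounded by `G` on the domain, has regret
at most `G · D · √T` against any fixed comparator in the domain. -/
theorem ogd_regret_constant_step
    {H : Type*} [NormedAddCommGroup H] [InnerProductSpace ℝ H] [CompleteSpace H]
    (K : Set H) (hKne : K.Nonempty) (hKcl : IsClosed K) (hKconv : Convex ℝ K)
    (D G : ℝ) (hD : 0 ≤ D) (hG : 0 < G)
    (hdiam : ∀ x ∈ K, ∀ y ∈ K, ‖x - y‖ ≤ D)
    (T : ℕ) (hT : 0 < T)
    (l : ℕ → H → ℝ)
    (hconv : ∀ t ∈ Finset.Icc 1 T, ConvexOn ℝ Set.univ (l t))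
    (hdiff : ∀ t ∈ Finset.Icc 1 T, Differentiable ℝ (l t))
    (hgrad : ∀ t ∈ Finset.Icc 1 T, ∀ x ∈ K, ‖gradient (l t) x‖ ≤ G)
    (proj : H → H)
    (hprojMem : ∀ z, proj z ∈ K)
    (hprojNear : ∀ z, ∀ c ∈ K, ‖z - proj z‖ ≤ ‖z - c‖)
    (η : ℝ) (hη : η = D / (G * Real.sqrt T))
    (x : ℕ → H) (hx1 : x 1 ∈ K)
    (hstep : ∀ t, 1 ≤ t → t < T → x (t + 1) = proj (x t - η • gradient (l t) (x t)))
    (xstar : H) (hxstar : xstar ∈ K) :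
    ∑ t ∈ Finset.Icc 1 T, l t (x t) - ∑ t ∈ Finset.Icc 1 T, l t xstar
      ≤ G * D * Real.sqrt T := by
  have hxK : ∀ t, 1 ≤ t → t ≤ T → x t ∈ K := by
    intro t
    induction t with
    | zero => omega
    | succ n ih =>
      intro h1 h2
      rcases Nat.eq_zero_or_pos n with rfl | hn
      · exact hx1
      · rw [hstep n hn (by omega)]; exact hprojMem _
  have hsqT : (0:ℝ) < Real.sqrt T := Real.sqrt_pos.2 (by exact_mod_cast hT)
  rcases eq_or_lt_of_le hD with hD0 | hDpos
  · have hxeq : ∀ t ∈ Finset.Icc 1 T, x t = xstar := by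
      intro t ht
      rw [Finset.mem_Icc] at ht
      have h1 := hdiam (x t) (hxK t ht.1 ht.2) xstar hxstar
      rw [← hD0] at h1
      have h2 : ‖x t - xstar‖ = 0 := le_antisymm h1 (norm_nonneg _)
      rwa [norm_sub_eq_zero_iff] at h2
    have heq : ∑ t ∈ Finset.Icc 1 T, l t (x t) = ∑ t ∈ Finset.Icc 1 T, l t xstar :=
      Finset.sum_congr rfl fun t ht => by rw [hxeq t ht]
    rw [heq, ← hD0]
    simp
  have hηpos : 0 < η := by rw [hη]; positivity
  have h2η : (0:ℝ) < 2 * η := by linarith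
  set ψ : ℕ → ℝ := fun t => if t ≤ T then ‖x t - xstar‖ ^ 2 else 0 with hψ
  have key : ∀ t ∈ Finset.Icc 1 T,
      l t (x t) - l t xstar ≤ (ψ t - ψ (t + 1)) / (2 * η) + η * G ^ 2 / 2 := by
    intro t ht
    obtain ⟨ht1, ht2⟩ := Finset.mem_Icc.1 ht
    set g := gradient (l t) (x t) with hg
    have hxtK : x t ∈ K := hxK t ht1 ht2
    have hgG : ‖g‖ ≤ G := hgrad t ht (x t) hxtK
    have hconvineq : l t (x t) - l t xstar ≤ ⟪ g, x t - xstar ⟫ := by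
      have h0 := convex_grad_ineq (hconv t ht) (hdiff t ht) (x t) xstar
      have h2 : ⟪ g, xstar - x t ⟫ = -⟪ g, x t - xstar ⟫ := by
        rw [show xstar - x t = -(x t - xstar) by abel, inner_neg_right]
      rw [← hg, h2] at h0
      linarith
    have hψt : ψ t = ‖x t - xstar‖ ^ 2 := by simp only [hψ]; rw [if_pos ht2]
    have hg2 : ‖g‖ ^ 2 ≤ G ^ 2 := by nlinarith [norm_nonneg g]
    have hkey2 : 2 * η * ⟪ g, x t - xstar ⟫ ≤ ψ t - ψ (t + 1) + η ^ 2 * G ^ 2 := by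
      rcases lt_or_eq_of_le ht2 with htT | htT
      · have hψt1 : ψ (t + 1) = ‖x (t + 1) - xstar‖ ^ 2 := by
          simp only [hψ]; rw [if_pos (by omega : t + 1 ≤ T)]
        have hproj : ‖x (t + 1) - xstar‖ ^ 2 ≤ ‖(x t - η • g) - xstar‖ ^ 2 := by
          rw [hstep t ht1 htT]
          exact proj_contract hKne hKconv proj hprojMem hprojNear _ hxstar
        have hexp : ‖(x t - η • g) - xstar‖ ^ 2
            = ‖x t - xstar‖ ^ 2 - 2 * η * ⟪ g, x t - xstar ⟫ + η ^ 2 * ‖g‖ ^ 2 := by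
          have h1 := norm_sub_sq_real (x t - xstar) (η • g)
          have h2 : ⟪ x t - xstar, η • g ⟫ = η * ⟪ g, x t - xstar ⟫ := by
            rw [real_inner_smul_right, real_inner_comm]
          have h3 : ‖η • g‖ ^ 2 = η ^ 2 * ‖g‖ ^ 2 := by
            rw [norm_smul]; simp [mul_pow, abs_of_pos hηpos]
          calc ‖(x t - η • g) - xstar‖ ^ 2 = ‖(x t - xstar) - η • g‖ ^ 2 := by
                rw [show (x t - η • g) - xstar = (x t - xstar) - η • g by abel]
            _ = _ := by rw [h1, h2, h3]; ring
        rw [hψt, hψt1]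
        rw [hexp] at hproj
        nlinarith [hηpos]
      · have hψt1 : ψ (t + 1) = 0 := by
          simp only [hψ]; rw [if_neg (by omega : ¬ t + 1 ≤ T)]
        rw [hψt, hψt1]
        have hcs : ⟪ g, x t - xstar ⟫ ≤ ‖g‖ * ‖x t - xstar‖ := real_inner_le_norm g _
        nlinarith [sq_nonneg (‖x t - xstar‖ - η * ‖g‖), norm_nonneg (x t - xstar),
          norm_nonneg g, hηpos]
    have hfrac : (ψ t - ψ (t + 1)) / (2 * η) + η * G ^ 2 / 2
        = (ψ t - ψ (t + 1) + η ^ 2 * G ^ 2) / (2 * η) := by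
      field_simp
    rw [hfrac, le_div_iff₀ h2η]
    nlinarith [hconvineq, hkey2]
  have hsum : ∑ t ∈ Finset.Icc 1 T, (l t (x t) - l t xstar)
      ≤ ∑ t ∈ Finset.Icc 1 T, ((ψ t - ψ (t + 1)) / (2 * η) + η * G ^ 2 / 2) :=
    Finset.sum_le_sum key
  have htel : ∑ t ∈ Finset.Icc 1 T, (ψ t - ψ (t + 1)) = ψ 1 := by
    rw [← Finset.Ico_add_one_right_eq_Icc, Finset.sum_Ico_eq_sum_range,
      show T + 1 - 1 = T from rfl]
    simp only [Nat.add_assoc]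
    rw [Finset.sum_range_sub' (fun i => ψ (1 + i)) T]
    have hz : ψ (1 + T) = 0 := by simp only [hψ]; rw [if_neg (by omega)]
    rw [hz]
    simp
  have hψ1 : ψ 1 ≤ D ^ 2 := by
    have h1 := hdiam (x 1) hx1 xstar hxstar
    simp only [hψ]
    rw [if_pos (by omega : 1 ≤ T)]
    nlinarith [norm_nonneg (x 1 - xstar)]
  have hcard : (Finset.Icc 1 T).card = T := by rw [Nat.card_Icc]; omega
  rw [← Finset.sum_sub_distrib]
  calc ∑ t ∈ Finset.Icc 1 T, (l t (x t) - l t xstar)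
      ≤ ∑ t ∈ Finset.Icc 1 T, ((ψ t - ψ (t + 1)) / (2 * η) + η * G ^ 2 / 2) := hsum
    _ = (∑ t ∈ Finset.Icc 1 T, (ψ t - ψ (t + 1))) / (2 * η) + T * (η * G ^ 2 / 2) := by
        rw [Finset.sum_add_distrib, ← Finset.sum_div, Finset.sum_const, hcard]
        ring
    _ = ψ 1 / (2 * η) + T * (η * G ^ 2 / 2) := by rw [htel]
    _ ≤ D ^ 2 / (2 * η) + T * (η * G ^ 2 / 2) := by gcongr
    _ = G * D * Real.sqrt T := by
        rw [hη]
        set s := Real.sqrt T with hs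
        have hTs : (T : ℝ) = s * s := (Real.mul_self_sqrt (Nat.cast_nonneg T)).symm
        have hG' : G ≠ 0 := ne_of_gt hG
        have hs' : s ≠ 0 := ne_of_gt hsqT
        have hD' : D ≠ 0 := ne_of_gt hDpos
        rw [hTs]
        field_simp
        ring
end

section
/- Let H be a real Hilbert space and K ⊆ H a nonempty, closed, convex set whose diameter is at most D. Let l_1, …, l_T : H → ℝ be convex differentiable functions whose gradients satisfy ‖∇l_t(x)‖ ≤ G for all x ∈ K and all t. Define iterates by x_1 ∈ K and x_{t+1} = P_K(x_t − η_t ∇l_t(x_t)) with time-varying step sizes η_t = D/(G·√t), where P_K is the metric projection onto K. Then for every x* ∈ K, Σ_{t=1}^T l_t(x_t) − Σ_{t=1}^T l_t(x*) ≤ (3/2)·G·D·√T. -/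
open InnerProductSpace

lemma ogd_grad_ineq {H : Type*} [NormedAddCommGroup H] [InnerProductSpace ℝ H] [CompleteSpace H]
    {f : H → ℝ} (hf : ConvexOn ℝ Set.univ f) (hd : Differentiable ℝ f) (x y : H) :
    (inner ℝ (gradient f x) (y - x) : ℝ) ≤ f y - f x := by
  have hφc : ConvexOn ℝ Set.univ (f ∘ (AffineMap.lineMap x y : ℝ →ᵃ[ℝ] H)) := by
    simpa using hf.comp_affineMap (AffineMap.lineMap x y : ℝ →ᵃ[ℝ] H)
  have hl : HasDerivAt (fun s : ℝ => (AffineMap.lineMap x y : ℝ →ᵃ[ℝ] H) s) (y - x) 0 := by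
    have h0 : HasDerivAt (fun s : ℝ => s • (y - x) + x) (y - x) 0 := by
      simpa using ((hasDerivAt_id (0:ℝ)).smul_const (y - x)).add_const x
    simp only [AffineMap.lineMap_apply, vsub_eq_sub, vadd_eq_add]
    exact h0
  have hchain : HasDerivAt (f ∘ (AffineMap.lineMap x y : ℝ →ᵃ[ℝ] H))
      (fderiv ℝ f x (y - x)) 0 := by
    have := ((hd _).hasFDerivAt (x := (AffineMap.lineMap x y : ℝ →ᵃ[ℝ] H) 0)).comp_hasDerivAt 0 hl
    simpa using this
  have hsl := hφc.le_slope_of_hasDerivAt (Set.mem_univ (0:ℝ)) (Set.mem_univ (1:ℝ))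
    zero_lt_one hchain
  have hslope : slope (f ∘ (AffineMap.lineMap x y : ℝ →ᵃ[ℝ] H)) 0 1 = f y - f x := by
    simp [slope, Function.comp]
  have hinner : (inner ℝ (gradient f x) (y - x) : ℝ) = fderiv ℝ f x (y - x) := by
    rw [show gradient f x = (InnerProductSpace.toDual ℝ H).symm (fderiv ℝ f x) from rfl,
      InnerProductSpace.toDual_symm_apply]
  rw [hinner]
  linarith [hsl, hslope.symm ▸ hsl]

lemma ogd_sum_sqrt (T : ℕ) : ∑ t ∈ Finset.Icc 1 T, 1 / Real.sqrt t ≤ 2 * Real.sqrt T := by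
  induction T with
  | zero => simp
  | succ n ih =>
    rw [Finset.sum_Icc_succ_top (by omega)]
    have h1 : Real.sqrt n ≤ Real.sqrt (n+1) := by
      apply Real.sqrt_le_sqrt; push_cast; linarith
    have h2 : (0:ℝ) < Real.sqrt (n+1) := Real.sqrt_pos.mpr (by positivity)
    have h3 : Real.sqrt n ^ 2 = (n:ℝ) := Real.sq_sqrt (by positivity)
    have h4 : Real.sqrt (n+1) ^ 2 = (n:ℝ)+1 := by
      rw [Real.sq_sqrt (by positivity)]
    have h5 : 1 / Real.sqrt ((n:ℝ)+1) ≤ 2 * Real.sqrt (n+1) - 2 * Real.sqrt n := by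
      rw [div_le_iff₀ h2]
      nlinarith [sq_nonneg (Real.sqrt (n+1) - Real.sqrt n), Real.sqrt_nonneg (n:ℝ)]
    push_cast
    push_cast at ih h5 ⊢
    linarith

lemma ogd_telescope (a : ℕ → ℝ) (B : ℝ) (ha0 : ∀ t, 0 ≤ a t) (haB : ∀ t, a t ≤ B) :
    ∀ T : ℕ, 1 ≤ T →
      ∑ t ∈ Finset.Icc 1 T, (a t - a (t+1)) * Real.sqrt t ≤ (B - a (T+1)) * Real.sqrt T := by
  intro T hT
  induction T, hT using Nat.le_induction with
  | base => simp; nlinarith [haB 1]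
  | succ n hn ih =>
    rw [Finset.sum_Icc_succ_top (by omega)]
    have h1 : Real.sqrt n ≤ Real.sqrt (n+1) := by
      apply Real.sqrt_le_sqrt; push_cast; linarith
    have h2 : (0:ℝ) ≤ Real.sqrt n := Real.sqrt_nonneg _
    push_cast at ih h1 ⊢
    nlinarith [haB (n+1), ha0 (n+1), ha0 (n+2)]

lemma ogd_proj_nonexp {H : Type*} [NormedAddCommGroup H] [InnerProductSpace ℝ H]
    [CompleteSpace H] (K : Set H) (hKconv : Convex ℝ K) (proj : H → H)
    (hprojMem : ∀ z, proj z ∈ K) (hprojNear : ∀ z, ∀ c ∈ K, ‖z - proj z‖ ≤ ‖z - c‖)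
    (z c : H) (hc : c ∈ K) : ‖proj z - c‖ ≤ ‖z - c‖ := by
  haveI : Nonempty K := ⟨⟨proj z, hprojMem z⟩⟩
  have hinf : ‖z - proj z‖ = ⨅ w : K, ‖z - w‖ := by
    apply le_antisymm
    · exact le_ciInf fun w => hprojNear z w w.2
    · have hbdd : BddBelow (Set.range fun w : K => ‖z - (w:H)‖) :=
        ⟨0, by rintro _ ⟨w, rfl⟩; exact norm_nonneg _⟩
      exact ciInf_le hbdd (⟨proj z, hprojMem z⟩ : K)
  have hvar := (norm_eq_iInf_iff_real_inner_le_zero hKconv (hprojMem z)).mp hinf c hc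
  have hexp : ‖z - c‖^2 = ‖z - proj z‖^2 + 2 * (inner ℝ (z - proj z) (proj z - c) : ℝ)
      + ‖proj z - c‖^2 := by
    have : z - c = (z - proj z) + (proj z - c) := by abel
    rw [this, norm_add_sq_real]
  have hip : (0:ℝ) ≤ inner ℝ (z - proj z) (proj z - c) := by
    have : (inner ℝ (z - proj z) (proj z - c) : ℝ) = - inner ℝ (z - proj z) (c - proj z) := by
      rw [← inner_neg_right, neg_sub]
    linarith
  nlinarith [norm_nonneg (proj z - c), norm_nonneg (z - c), norm_nonneg (z - proj z)]


/-- Projected online gradient descent with time-varying step sizes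
`η_t = D / (G √t)` over a nonempty closed convex set of diameter at most `D`,
applied to convex differentiable losses with gradients bounded by `G` on the
domain, has regret at most `(3/2) · G · D · √T` against any fixed comparator
in the domain. -/
theorem ogd_regret_decreasing_step
    {H : Type*} [NormedAddCommGroup H] [InnerProductSpace ℝ H] [CompleteSpace H]
    (K : Set H) (hKne : K.Nonempty) (hKcl : IsClosed K) (hKconv : Convex ℝ K)
    (D G : ℝ) (hD : 0 ≤ D) (hG : 0 < G)
    (hdiam : ∀ x ∈ K, ∀ y ∈ K, ‖x - y‖ ≤ D)
    (T : ℕ) (hT : 0 < T)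
    (l : ℕ → H → ℝ)
    (hconv : ∀ t ∈ Finset.Icc 1 T, ConvexOn ℝ Set.univ (l t))
    (hdiff : ∀ t ∈ Finset.Icc 1 T, Differentiable ℝ (l t))
    (hgrad : ∀ t ∈ Finset.Icc 1 T, ∀ x ∈ K, ‖gradient (l t) x‖ ≤ G)
    (proj : H → H)
    (hprojMem : ∀ z, proj z ∈ K)
    (hprojNear : ∀ z, ∀ c ∈ K, ‖z - proj z‖ ≤ ‖z - c‖)
    (η : ℕ → ℝ) (hη : ∀ t, 1 ≤ t → t ≤ T → η t = D / (G * Real.sqrt t))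
    (x : ℕ → H) (hx1 : x 1 ∈ K)
    (hstep : ∀ t, 1 ≤ t → t < T → x (t + 1) = proj (x t - η t • gradient (l t) (x t)))
    (xstar : H) (hxstar : xstar ∈ K) :
    ∑ t ∈ Finset.Icc 1 T, l t (x t) - ∑ t ∈ Finset.Icc 1 T, l t xstar
      ≤ (3 / 2) * G * D * Real.sqrt T := by
  -- membership of iterates
  have hmem : ∀ t, 1 ≤ t → t ≤ T → x t ∈ K := by
    intro t
    induction t with
    | zero => exact fun h => absurd h (by omega)
    | succ n ih =>
      intro h1 h2
      rcases Nat.eq_zero_or_pos n with hn | hn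
      · subst hn; exact hx1
      · rw [hstep n hn (by omega)]; exact hprojMem _
  rcases eq_or_lt_of_le hD with hD0 | hDpos
  · -- D = 0 : all points of K coincide
    have hxeq : ∀ t ∈ Finset.Icc 1 T, l t (x t) = l t xstar := by
      intro t ht
      rw [Finset.mem_Icc] at ht
      have h := hdiam (x t) (hmem t ht.1 ht.2) xstar hxstar
      rw [← hD0] at h
      have : x t - xstar = 0 := by
        rw [← norm_eq_zero]; exact le_antisymm h (norm_nonneg _)
      rw [sub_eq_zero] at this
      rw [this]
    rw [Finset.sum_congr rfl hxeq, ← hD0]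
    simp
  -- main case D > 0
  · set b : ℕ → ℝ := fun t => if 1 ≤ t ∧ t ≤ T then ‖x t - xstar‖^2 else 0 with hbdef
    have hb0 : ∀ t, 0 ≤ b t := by
      intro t; simp only [hbdef]; split <;> positivity
    have hbB : ∀ t, b t ≤ D^2 := by
      intro t; simp only [hbdef]; split
      · next h => exact pow_le_pow_left₀ (norm_nonneg _) (hdiam _ (hmem t h.1 h.2) _ hxstar) 2
      · positivity
    have key : ∀ t ∈ Finset.Icc 1 T, l t (x t) - l t xstar
        ≤ (b t - b (t+1)) * (G * Real.sqrt t / (2*D)) + G * D / (2 * Real.sqrt t) := by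
      intro t ht
      have htm := ht
      rw [Finset.mem_Icc] at ht
      obtain ⟨ht1, htT⟩ := ht
      set g := gradient (l t) (x t) with hg
      have hxK := hmem t ht1 htT
      have hst : (0:ℝ) < Real.sqrt t := Real.sqrt_pos.mpr (by exact_mod_cast Nat.pos_of_ne_zero (by omega))
      have hηt : η t = D / (G * Real.sqrt t) := hη t ht1 htT
      have hηpos : 0 < η t := by rw [hηt]; positivity
      have hgle : ‖g‖ ≤ G := hgrad t htm _ hxK
      -- gradient inequality
      have h1 : l t (x t) - l t xstar ≤ (inner ℝ g (x t - xstar) : ℝ) := by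
        have h' := ogd_grad_ineq (hconv t htm) (hdiff t htm) (x t) xstar
        have he : (inner ℝ g (x t - xstar) : ℝ) = - inner ℝ g (xstar - x t) := by
          rw [← inner_neg_right, neg_sub]
        rw [he]; linarith [h']
      -- expansion of the unprojected step
      set y := x t - η t • g with hy
      have hexp : ‖y - xstar‖^2 = ‖x t - xstar‖^2
          - 2 * η t * (inner ℝ g (x t - xstar) : ℝ) + (η t)^2 * ‖g‖^2 := by
        have hrw : y - xstar = (x t - xstar) - η t • g := by rw [hy]; abel
        rw [hrw, norm_sub_sq_real, real_inner_smul_right, real_inner_comm, norm_smul,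
          mul_pow, Real.norm_eq_abs, sq_abs]
        ring
      have hbt : b t = ‖x t - xstar‖^2 := by simp [hbdef, ht1, htT]
      have hproj : b (t+1) ≤ ‖y - xstar‖^2 := by
        rcases lt_or_eq_of_le htT with hlt | heq
        · have hb1 : b (t+1) = ‖x (t+1) - xstar‖^2 := by
            simp only [hbdef]; rw [if_pos ⟨by omega, by omega⟩]
          rw [hb1, hstep t ht1 hlt]
          exact pow_le_pow_left₀ (norm_nonneg _)
            (ogd_proj_nonexp K hKconv proj hprojMem hprojNear y xstar hxstar) 2
        · have hb1 : b (t+1) = 0 := by simp [hbdef]; omega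
          rw [hb1]; positivity
      have h2 : 2 * η t * (inner ℝ g (x t - xstar) : ℝ)
          ≤ b t - b (t+1) + (η t)^2 * G^2 := by
        have hgg : (η t)^2 * ‖g‖^2 ≤ (η t)^2 * G^2 :=
          mul_le_mul_of_nonneg_left (pow_le_pow_left₀ (norm_nonneg g) hgle 2) (sq_nonneg (η t))
        linarith [hexp, hproj, hbt, hgg]
      have e1 : (b t - b (t+1)) * (G * Real.sqrt t / (2*D)) + G * D / (2 * Real.sqrt t)
          = ((b t - b (t+1)) + (η t)^2 * G^2) / (2 * η t) := by
        rw [hηt]; field_simp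
      rw [e1, le_div_iff₀ (by positivity)]
      nlinarith [h1, h2]
    -- assemble
    have hsum : ∑ t ∈ Finset.Icc 1 T, l t (x t) - ∑ t ∈ Finset.Icc 1 T, l t xstar
        = ∑ t ∈ Finset.Icc 1 T, (l t (x t) - l t xstar) := by
      rw [Finset.sum_sub_distrib]
    rw [hsum]
    have htel : ∑ t ∈ Finset.Icc 1 T, (b t - b (t+1)) * Real.sqrt t ≤ D^2 * Real.sqrt T := by
      have := ogd_telescope b (D^2) hb0 hbB T hT
      nlinarith [hb0 (T+1), Real.sqrt_nonneg (T:ℝ)]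
    have hsq := ogd_sum_sqrt T
    calc ∑ t ∈ Finset.Icc 1 T, (l t (x t) - l t xstar)
        ≤ ∑ t ∈ Finset.Icc 1 T,
            ((b t - b (t+1)) * (G * Real.sqrt t / (2*D)) + G * D / (2 * Real.sqrt t)) :=
          Finset.sum_le_sum key
      _ = (G / (2*D)) * ∑ t ∈ Finset.Icc 1 T, (b t - b (t+1)) * Real.sqrt t
            + (G * D / 2) * ∑ t ∈ Finset.Icc 1 T, 1 / Real.sqrt t := by
          rw [Finset.sum_add_distrib, Finset.mul_sum, Finset.mul_sum]
          congr 1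
          · exact Finset.sum_congr rfl fun t _ => by ring
          · exact Finset.sum_congr rfl fun t _ => by ring
      _ ≤ (G / (2*D)) * (D^2 * Real.sqrt T) + (G * D / 2) * (2 * Real.sqrt T) := by
          gcongr
      _ = (3 / 2) * G * D * Real.sqrt T := by
          field_simp
          ring
end
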